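/- Let n ≥ 1, ε > 0 and t > 0. Let X₁, …, X_n be i.i.d. random variables on a probability space taking values in a measurable space, let E be a measurable set, p = Pr[X₁ ∈ E], and P̄ = (1/n)·∑_{i=1}^n 1{X_i ∈ E}. Let r be a real-valued random variable, independent of (X₁, …, X_n), whose law is the Laplace distribution Lap(1/ε). Then Pr[|(P̄ + r/n) − p| > t] ≤ 2·exp(−n·t²/2) + exp(−n·t·ε/2). -/

import Mathlib

open MeasureTheory ProbabilityTheory Real Set
open scoped ENNReal

section helpers

lemma bern_D_pos {p : ℝ} (hp0 : 0 ≤ p) (hp1 : p ≤ 1) (s : ℝ) :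
    0 < 1 - p + p * exp s := by
  rcases lt_or_eq_of_le hp1 with h | h
  · have : 0 ≤ p * exp s := mul_nonneg hp0 (exp_pos s).le
    linarith
  · subst h; simpa using exp_pos s

lemma bern_mgf_bound {p : ℝ} (hp0 : 0 ≤ p) (hp1 : p ≤ 1) (s : ℝ) :
    exp (-(s * p)) * (1 - p + p * exp s) ≤ exp (s ^ 2 / 8) := by
  set D : ℝ → ℝ := fun s => 1 - p + p * exp s with hD
  have hDpos : ∀ s, 0 < D s := fun s => bern_D_pos hp0 hp1 s
  set g' : ℝ → ℝ := fun s => s / 4 + p - p * exp s / D s with hg'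
  set g : ℝ → ℝ := fun s => s ^ 2 / 8 + s * p - Real.log (D s) with hg
  have hDderiv : ∀ s, HasDerivAt D (p * exp s) s := by
    intro s
    exact ((Real.hasDerivAt_exp s).const_mul p).const_add (1 - p)
  have hg'deriv : ∀ s, HasDerivAt g' (1 / 4 - p * exp s * (1 - p) / (D s) ^ 2) s := by
    intro s
    have h1 : HasDerivAt (fun s => p * exp s) (p * exp s) s :=
      (Real.hasDerivAt_exp s).const_mul p
    have h2 : HasDerivAt (fun s => p * exp s / D s)
        ((p * exp s * D s - p * exp s * (p * exp s)) / (D s) ^ 2) s :=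
      h1.div (hDderiv s) (hDpos s).ne'
    have h3 : HasDerivAt (fun s => s / 4 + p) (1 / 4) s := by
      simpa using ((hasDerivAt_id s).div_const 4).add_const p
    have hnum : p * exp s * D s - p * exp s * (p * exp s) = p * exp s * (1 - p) := by
      simp only [hD]; ring
    have := h3.sub h2
    rw [hnum] at this
    exact this
  have hg'mono : Monotone g' := by
    apply monotone_of_deriv_nonneg
    · exact fun x => (hg'deriv x).differentiableAt
    · intro x
      rw [(hg'deriv x).deriv]
      have hDx : D x = (1 - p) + p * exp x := rfl
      have h5 : p * exp x * (1 - p) / D x ^ 2 ≤ 1 / 4 := by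
        rw [div_le_iff₀ (pow_pos (hDpos x) 2), hDx]
        nlinarith [sq_nonneg ((1 - p) - p * exp x)]
      linarith
  have hg'0 : g' 0 = 0 := by
    have : D 0 = 1 := by simp [hD]
    simp [hg', this]
  have hgderiv : ∀ s, HasDerivAt g (g' s) s := by
    intro s
    have h1 : HasDerivAt (fun s : ℝ => s ^ 2 / 8 + s * p) (s / 4 + p) s := by
      have := ((hasDerivAt_pow 2 s).div_const 8).add ((hasDerivAt_id s).mul_const p)
      refine this.congr_deriv ?_
      norm_num
      ring
    have h2 : HasDerivAt (fun s => Real.log (D s)) (p * exp s / D s) s :=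
      (hDderiv s).log (hDpos s).ne'
    exact h1.sub h2
  have hg0 : g 0 = 0 := by
    have : D 0 = 1 := by simp [hD]
    simp [hg, this]
  have key : ∀ s, 0 ≤ g s := by
    intro s
    rcases le_total 0 s with h | h
    · have hmono : MonotoneOn g (Set.Ici (0 : ℝ)) := by
        apply monotoneOn_of_deriv_nonneg (convex_Ici 0)
        · exact fun x _ => (hgderiv x).continuousAt.continuousWithinAt
        · exact fun x _ => (hgderiv x).differentiableAt.differentiableWithinAt
        · intro x hx
          rw [(hgderiv x).deriv]
          rw [← hg'0]
          rw [interior_Ici] at hx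
          exact hg'mono (le_of_lt hx)
      have := hmono (Set.self_mem_Ici) (by exact h) h
      rwa [hg0] at this
    · have hanti : AntitoneOn g (Set.Iic (0 : ℝ)) := by
        apply antitoneOn_of_deriv_nonpos (convex_Iic 0)
        · exact fun x _ => (hgderiv x).continuousAt.continuousWithinAt
        · exact fun x _ => (hgderiv x).differentiableAt.differentiableWithinAt
        · intro x hx
          rw [(hgderiv x).deriv]
          rw [← hg'0]
          rw [interior_Iic] at hx
          exact hg'mono (le_of_lt hx)
      have := hanti (by exact h) (Set.self_mem_Iic) h
      rwa [hg0] at this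
  have := key s
  have hlog : Real.log (D s) ≤ s ^ 2 / 8 + s * p := by
    simp only [hg] at this; linarith
  calc exp (-(s * p)) * (1 - p + p * exp s) = exp (-(s * p) + Real.log (D s)) := by
        rw [Real.exp_add, Real.exp_log (hDpos s)]
    _ ≤ exp (s ^ 2 / 8) := by
        apply Real.exp_le_exp.mpr; linarith


lemma lap_half {ε : ℝ} (hε : 0 < ε) (s : ℝ) :
    ∫⁻ x in Ioi s, ENNReal.ofReal (ε / 2 * exp (-(ε * x))) =
      ENNReal.ofReal (exp (-(ε * s)) / 2) := by
  have hint : IntegrableOn (fun x => ε / 2 * exp (-(ε * x))) (Ioi s) := by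
    have := (exp_neg_integrableOn_Ioi s hε).const_mul (ε / 2)
    simpa [neg_mul, IntegrableOn] using this
  rw [← ofReal_integral_eq_lintegral_ofReal hint
    (ae_of_all _ fun x => by positivity)]
  congr 1
  have hF : ∀ x ∈ Ici s, HasDerivAt (fun y => -(1 / 2) * exp (-(ε * y)))
      (ε / 2 * exp (-(ε * x))) x := by
    intro x _
    have h1 : HasDerivAt (fun y : ℝ => -(ε * y)) (-ε) x := by
      have := ((hasDerivAt_id x).const_mul ε).neg; simp at this; exact this
    have := (h1.exp).const_mul (-(1 / 2 : ℝ))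
    refine this.congr_deriv ?_
    ring
  have htend : Filter.Tendsto (fun y => -(1 / 2) * exp (-(ε * y))) Filter.atTop (nhds 0) := by
    have h1 : Filter.Tendsto (fun y : ℝ => ε * y) Filter.atTop Filter.atTop :=
      Filter.Tendsto.const_mul_atTop hε Filter.tendsto_id
    have h2 : Filter.Tendsto (fun y : ℝ => -(ε * y)) Filter.atTop Filter.atBot :=
      Filter.tendsto_neg_atBot_iff.mpr h1
    have h3 := Real.tendsto_exp_atBot.comp h2
    have h4 := h3.const_mul (-(1 / 2 : ℝ))
    simpa using h4
  have := integral_Ioi_of_hasDerivAt_of_tendsto' hF hint htend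
  rw [this]
  ring

lemma laplace_tail {ε : ℝ} (hε : 0 < ε) {s : ℝ} (hs : 0 < s) :
    (volume.withDensity
        (fun x : ℝ => ENNReal.ofReal ((1 / (2 * (1 / ε))) * exp (-|x| / (1 / ε)))))
      {x : ℝ | s ≤ |x|} = ENNReal.ofReal (exp (-(ε * s))) := by
  have hfeq : (fun x : ℝ => ENNReal.ofReal ((1 / (2 * (1 / ε))) * exp (-|x| / (1 / ε)))) =
      fun x : ℝ => ENNReal.ofReal (ε / 2 * exp (-(ε * |x|))) := by
    funext x
    have h1 : (1 : ℝ) / (2 * (1 / ε)) = ε / 2 := by field_simp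
    have h2 : -|x| / (1 / ε) = -(ε * |x|) := by field_simp
    rw [h1, h2]
  have hSeq : {x : ℝ | s ≤ |x|} = Iic (-s) ∪ Ici s := by
    ext x
    simp only [mem_setOf_eq, mem_union, mem_Iic, mem_Ici, le_abs]
    constructor
    · rintro (h | h); · right; exact h
      · left; linarith
    · rintro (h | h); · right; linarith
      · left; exact h
  have hSm : MeasurableSet {x : ℝ | s ≤ |x|} := by
    rw [hSeq]; exact measurableSet_Iic.union measurableSet_Ici
  rw [withDensity_apply _ hSm, hfeq, hSeq,
    lintegral_union measurableSet_Ici (by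
      rw [Set.disjoint_iff]
      rintro x ⟨h1, h2⟩
      simp only [mem_Iic] at h1
      simp only [mem_Ici] at h2
      exact absurd (h2.trans h1) (by linarith))]
  have hright : ∫⁻ x in Ici s, ENNReal.ofReal (ε / 2 * exp (-(ε * |x|))) =
      ENNReal.ofReal (exp (-(ε * s)) / 2) := by
    rw [← restrict_Ioi_eq_restrict_Ici,
      setLIntegral_congr_fun measurableSet_Ioi (fun x hx => by
        rw [abs_of_pos (lt_trans hs hx)]), lap_half hε s]
  have hleft : ∫⁻ x in Iic (-s), ENNReal.ofReal (ε / 2 * exp (-(ε * |x|))) =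
      ENNReal.ofReal (exp (-(ε * s)) / 2) := by
    rw [← restrict_Iio_eq_restrict_Iic,
      setLIntegral_congr_fun measurableSet_Iio (fun x hx => by
        rw [abs_of_neg (lt_trans hx (by linarith))])]
    have hmap : (volume : Measure ℝ) = Measure.map Neg.neg volume :=
      (Measure.map_neg_eq_self (volume : Measure ℝ)).symm
    have hmeasf : Measurable fun x : ℝ => ENNReal.ofReal (ε / 2 * exp (-(ε * -x))) := by
      fun_prop
    calc ∫⁻ x in Iio (-s), ENNReal.ofReal (ε / 2 * exp (-(ε * -x))) ∂volume
        = ∫⁻ x in Iio (-s), ENNReal.ofReal (ε / 2 * exp (-(ε * -x)))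
            ∂(Measure.map Neg.neg volume) := by rw [← hmap]
      _ = ∫⁻ x in Neg.neg ⁻¹' Iio (-s), ENNReal.ofReal (ε / 2 * exp (-(ε * -(-x)))) ∂volume := by
            rw [setLIntegral_map measurableSet_Iio hmeasf measurable_neg]
      _ = ∫⁻ x in Ioi s, ENNReal.ofReal (ε / 2 * exp (-(ε * x))) ∂volume := by
            congr 1
            · rw [Set.neg_preimage, Set.neg_Iio, neg_neg]
            · funext x; rw [neg_neg]
      _ = ENNReal.ofReal (exp (-(ε * s)) / 2) := lap_half hε s
  rw [hleft, hright, ← ENNReal.ofReal_add (by positivity) (by positivity)]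
  congr 1
  ring

end helpers

section mainproof

variable {Ω : Type*} [MeasureSpace Ω] [IsProbabilityMeasure (volume : Measure Ω)]

lemma mgf_indicator_sub {E' : Type*} [MeasurableSpace E'] {X : Ω → E'} (hX : Measurable X)
    {E : Set E'} (hE : MeasurableSet E) (p s : ℝ) (hp : (volume (X ⁻¹' E)).toReal = p) :
    mgf (fun ω => E.indicator (fun _ => (1 : ℝ)) (X ω) - p) volume s =
      exp (-(s * p)) * (1 - p + p * exp s) := by
  have hcomp : (fun ω => E.indicator (fun _ => (1 : ℝ)) (X ω)) =
      (X ⁻¹' E).indicator (fun _ => (1 : ℝ)) := by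
    funext ω
    by_cases hx : X ω ∈ E <;>
      simp [Set.indicator_apply, Set.mem_preimage, hx]
  have hkey : ∀ a : ℝ, a = 0 ∨ a = 1 →
      exp (s * (a - p)) = exp (-(s * p)) * (1 + (exp s - 1) * a) := by
    rintro a (rfl | rfl)
    · simp [mul_comm]
    · have h1 : 1 + (exp s - 1) * 1 = exp s := by ring
      rw [h1, ← Real.exp_add]
      congr 1
      ring
  simp only [mgf]
  calc ∫ ω, exp (s * (E.indicator (fun _ => (1 : ℝ)) (X ω) - p))
      = ∫ ω, exp (-(s * p)) * (1 + (exp s - 1) * (X ⁻¹' E).indicator (fun _ => (1 : ℝ)) ω) := by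
        congr 1
        funext ω
        by_cases hx : X ω ∈ E
        · rw [Set.indicator_of_mem hx, Set.indicator_of_mem (show ω ∈ X ⁻¹' E from hx)]
          exact hkey 1 (Or.inr rfl)
        · rw [Set.indicator_of_notMem hx,
            Set.indicator_of_notMem (show ω ∉ X ⁻¹' E from hx)]
          exact hkey 0 (Or.inl rfl)
    _ = exp (-(s * p)) *
        ∫ ω, (1 + (exp s - 1) * (X ⁻¹' E).indicator (fun _ => (1 : ℝ)) ω) := by
        rw [integral_const_mul]
    _ = exp (-(s * p)) * (1 + (exp s - 1) * p) := by
        have hind_int : Integrable ((X ⁻¹' E).indicator fun _ => (1 : ℝ)) volume :=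
          (integrable_const (1 : ℝ)).indicator (hX hE)
        rw [integral_add (integrable_const (1 : ℝ)) (hind_int.const_mul _),
          integral_const_mul, integral_indicator_const (1 : ℝ) (hX hE), integral_const]
        simp [measureReal_def, hp]
    _ = exp (-(s * p)) * (1 - p + p * exp s) := by ring

end mainproof

theorem private_empirical_frequency_bound {Ω : Type*} [MeasureSpace Ω]
    [IsProbabilityMeasure (volume : Measure Ω)]
    {E' : Type*} [MeasurableSpace E'] (n : ℕ) (hn : 1 ≤ n)
    (ε t : ℝ) (hε : 0 < ε) (ht : 0 < t)
    (X : Fin n → Ω → E') (hmeas : ∀ i, Measurable (X i))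
    (hindep : iIndepFun X volume)
    (hident : ∀ i, IdentDistrib (X i) (X ⟨0, hn⟩) volume volume)
    (E : Set E') (hE : MeasurableSet E)
    (r : Ω → ℝ) (hr : Measurable r)
    (hlaw : Measure.map r volume =
      volume.withDensity
        (fun x : ℝ => ENNReal.ofReal ((1 / (2 * (1 / ε))) * Real.exp (-|x| / (1 / ε)))))
    (hrindep : IndepFun (fun ω => fun i => X i ω) r volume) :
    volume {ω : Ω |
        t < |((1 / (n : ℝ)) * ∑ i : Fin n, E.indicator (fun _ => (1 : ℝ)) (X i ω)
              + r ω / n) -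
            (volume (X ⟨0, hn⟩ ⁻¹' E)).toReal|} ≤
      ENNReal.ofReal (2 * Real.exp (-n * t ^ 2 / 2) + Real.exp (-n * t * ε / 2)) := by
  have hnpos : (0 : ℝ) < n := by exact_mod_cast hn
  set p : ℝ := (volume (X ⟨0, hn⟩ ⁻¹' E)).toReal with hpdef
  have hp0 : 0 ≤ p := ENNReal.toReal_nonneg
  have hp1 : p ≤ 1 := by
    rw [hpdef]
    have h1 : volume (X ⟨0, hn⟩ ⁻¹' E) ≤ 1 := prob_le_one
    calc (volume (X ⟨0, hn⟩ ⁻¹' E)).toReal ≤ (1 : ℝ≥0∞).toReal :=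
          ENNReal.toReal_mono ENNReal.one_ne_top h1
      _ = 1 := ENNReal.toReal_one
  set Y : Fin n → Ω → ℝ := fun i ω => E.indicator (fun _ => (1 : ℝ)) (X i ω) - p with hYdef
  have hYmeas : ∀ i, Measurable (Y i) := fun i =>
    ((measurable_const.indicator hE).comp (hmeas i)).sub measurable_const
  have hYindep : iIndepFun Y volume :=
    hindep.comp (fun _ (x : E') => E.indicator (fun _ => (1 : ℝ)) x - p)
      (fun _ => (measurable_const.indicator hE).sub measurable_const)
  have hYbd : ∀ i ω, |Y i ω| ≤ 1 := by
    intro i ω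
    rw [abs_le]
    by_cases hx : X i ω ∈ E
    · have : Y i ω = 1 - p := by
        show E.indicator (fun _ => (1 : ℝ)) (X i ω) - p = 1 - p
        rw [Set.indicator_of_mem hx]
      rw [this]; constructor <;> linarith
    · have : Y i ω = 0 - p := by
        show E.indicator (fun _ => (1 : ℝ)) (X i ω) - p = 0 - p
        rw [Set.indicator_of_notMem hx]
      rw [this]; constructor <;> linarith
  have hmgfY : ∀ i (c : ℝ), mgf (Y i) volume c ≤ exp (c ^ 2 / 8) := by
    intro i c
    have hpi : (volume (X i ⁻¹' E)).toReal = p := by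
      rw [hpdef, (hident i).measure_mem_eq hE]
    calc mgf (Y i) volume c = exp (-(c * p)) * (1 - p + p * exp c) :=
          mgf_indicator_sub (hmeas i) hE p c hpi
      _ ≤ exp (c ^ 2 / 8) := bern_mgf_bound hp0 hp1 c
  have hYint : ∀ i (c : ℝ), Integrable (fun ω => exp (c * Y i ω)) volume := by
    intro i c
    refine Integrable.mono' (integrable_const (exp |c|))
      (((hYmeas i).const_mul c).exp.aestronglyMeasurable) (ae_of_all _ fun ω => ?_)
    rw [Real.norm_eq_abs, Real.abs_exp]
    apply Real.exp_le_exp.mpr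
    calc c * Y i ω ≤ |c * Y i ω| := le_abs_self _
      _ = |c| * |Y i ω| := abs_mul _ _
      _ ≤ |c| * 1 := mul_le_mul_of_nonneg_left (hYbd i ω) (abs_nonneg c)
      _ = |c| := mul_one _
  have hSint : ∀ c : ℝ, Integrable (fun ω => exp (c * (∑ i, Y i) ω)) volume := fun c =>
    hYindep.integrable_exp_mul_sum hYmeas (fun i _ => hYint i c)
  have hSmgf : ∀ c : ℝ, mgf (∑ i, Y i) volume c ≤ exp ((n : ℝ) * c ^ 2 / 8) := by
    intro c
    rw [hYindep.mgf_sum hYmeas]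
    calc ∏ i : Fin n, mgf (Y i) volume c ≤ ∏ _i : Fin n, exp (c ^ 2 / 8) :=
          Finset.prod_le_prod (fun i _ => mgf_nonneg) (fun i _ => hmgfY i c)
      _ = exp (c ^ 2 / 8) ^ n := by
          rw [Finset.prod_const, Finset.card_univ, Fintype.card_fin]
      _ = exp ((n : ℝ) * (c ^ 2 / 8)) := (Real.exp_nat_mul _ n).symm
      _ = exp ((n : ℝ) * c ^ 2 / 8) := by ring_nf
  have hup : volume {ω | (n : ℝ) * t / 2 ≤ (∑ i, Y i) ω} ≤
      ENNReal.ofReal (exp (-(n : ℝ) * t ^ 2 / 2)) := by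
    rw [ENNReal.le_ofReal_iff_toReal_le (measure_ne_top _ _) (exp_pos _).le]
    calc (volume {ω | (n : ℝ) * t / 2 ≤ (∑ i, Y i) ω}).toReal
        ≤ exp (-(2 * t) * ((n : ℝ) * t / 2)) * mgf (∑ i, Y i) volume (2 * t) :=
          measure_ge_le_exp_mul_mgf _ (by positivity) (hSint (2 * t))
      _ ≤ exp (-(2 * t) * ((n : ℝ) * t / 2)) * exp ((n : ℝ) * (2 * t) ^ 2 / 8) :=
          mul_le_mul_of_nonneg_left (hSmgf (2 * t)) (exp_pos _).le
      _ = exp (-(n : ℝ) * t ^ 2 / 2) := by rw [← Real.exp_add]; congr 1; ring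
  have hlo : volume {ω | (∑ i, Y i) ω ≤ -((n : ℝ) * t / 2)} ≤
      ENNReal.ofReal (exp (-(n : ℝ) * t ^ 2 / 2)) := by
    rw [ENNReal.le_ofReal_iff_toReal_le (measure_ne_top _ _) (exp_pos _).le]
    calc (volume {ω | (∑ i, Y i) ω ≤ -((n : ℝ) * t / 2)}).toReal
        ≤ exp (-(-(2 * t)) * (-((n : ℝ) * t / 2))) * mgf (∑ i, Y i) volume (-(2 * t)) :=
          measure_le_le_exp_mul_mgf _ (by linarith) (hSint (-(2 * t)))
      _ ≤ exp (-(-(2 * t)) * (-((n : ℝ) * t / 2))) * exp ((n : ℝ) * (-(2 * t)) ^ 2 / 8) :=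
          mul_le_mul_of_nonneg_left (hSmgf (-(2 * t))) (exp_pos _).le
      _ = exp (-(n : ℝ) * t ^ 2 / 2) := by rw [← Real.exp_add]; congr 1; ring
  have hlap : volume {ω | (n : ℝ) * t / 2 ≤ |r ω|} ≤
      ENNReal.ofReal (exp (-(n : ℝ) * t * ε / 2)) := by
    have hm : MeasurableSet {x : ℝ | (n : ℝ) * t / 2 ≤ |x|} :=
      measurable_abs measurableSet_Ici
    have hset : {ω | (n : ℝ) * t / 2 ≤ |r ω|} = r ⁻¹' {x : ℝ | (n : ℝ) * t / 2 ≤ |x|} := rfl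
    rw [hset, ← Measure.map_apply hr hm, hlaw,
      laplace_tail hε (show (0 : ℝ) < (n : ℝ) * t / 2 by positivity)]
    apply le_of_eq
    congr 1
    ring
  have hincl : {ω : Ω |
        t < |((1 / (n : ℝ)) * ∑ i : Fin n, E.indicator (fun _ => (1 : ℝ)) (X i ω)
              + r ω / n) - p|} ⊆
      {ω | (n : ℝ) * t / 2 ≤ (∑ i, Y i) ω} ∪
        ({ω | (∑ i, Y i) ω ≤ -((n : ℝ) * t / 2)} ∪ {ω | (n : ℝ) * t / 2 ≤ |r ω|}) := by
    intro ω hω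
    simp only [Set.mem_setOf_eq] at hω
    by_contra hc
    simp only [Set.mem_union, Set.mem_setOf_eq, not_or] at hc
    push_neg at hc
    obtain ⟨h1, h2, h3⟩ := hc
    have hsum : (∑ i, Y i) ω =
        (∑ i : Fin n, E.indicator (fun _ => (1 : ℝ)) (X i ω)) - (n : ℝ) * p := by
      rw [Finset.sum_apply]
      show (∑ i : Fin n, (E.indicator (fun _ => (1 : ℝ)) (X i ω) - p)) = _
      rw [Finset.sum_sub_distrib, Finset.sum_const, Finset.card_univ, Fintype.card_fin,
        nsmul_eq_mul]
    have hexpr : ((1 / (n : ℝ)) * ∑ i : Fin n, E.indicator (fun _ => (1 : ℝ)) (X i ω)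
        + r ω / n) - p = ((∑ i, Y i) ω + r ω) / n := by
      rw [hsum]
      field_simp
      ring
    rw [hexpr] at hω
    have hS : |(∑ i, Y i) ω| < (n : ℝ) * t / 2 := abs_lt.mpr ⟨by linarith, by linarith⟩
    have habs : |(∑ i, Y i) ω + r ω| < (n : ℝ) * t := by
      calc |(∑ i, Y i) ω + r ω| ≤ |(∑ i, Y i) ω| + |r ω| := abs_add_le _ _
        _ < (n : ℝ) * t / 2 + (n : ℝ) * t / 2 := add_lt_add hS h3
        _ = (n : ℝ) * t := by ring
    have hlt : |((∑ i, Y i) ω + r ω) / (n : ℝ)| < t := by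
      rw [abs_div, abs_of_pos hnpos, div_lt_iff₀ hnpos]
      linarith
    linarith
  calc volume {ω : Ω |
        t < |((1 / (n : ℝ)) * ∑ i : Fin n, E.indicator (fun _ => (1 : ℝ)) (X i ω)
              + r ω / n) - p|}
      ≤ volume ({ω | (n : ℝ) * t / 2 ≤ (∑ i, Y i) ω} ∪
          ({ω | (∑ i, Y i) ω ≤ -((n : ℝ) * t / 2)} ∪ {ω | (n : ℝ) * t / 2 ≤ |r ω|})) :=
        measure_mono hincl
    _ ≤ volume {ω | (n : ℝ) * t / 2 ≤ (∑ i, Y i) ω} +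
          volume ({ω | (∑ i, Y i) ω ≤ -((n : ℝ) * t / 2)} ∪
            {ω | (n : ℝ) * t / 2 ≤ |r ω|}) := measure_union_le _ _
    _ ≤ volume {ω | (n : ℝ) * t / 2 ≤ (∑ i, Y i) ω} +
          (volume {ω | (∑ i, Y i) ω ≤ -((n : ℝ) * t / 2)} +
            volume {ω | (n : ℝ) * t / 2 ≤ |r ω|}) :=
        add_le_add le_rfl (measure_union_le _ _)
    _ ≤ ENNReal.ofReal (exp (-(n : ℝ) * t ^ 2 / 2)) +
          (ENNReal.ofReal (exp (-(n : ℝ) * t ^ 2 / 2)) +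
            ENNReal.ofReal (exp (-(n : ℝ) * t * ε / 2))) :=
        add_le_add hup (add_le_add hlo hlap)
    _ = ENNReal.ofReal (2 * Real.exp (-n * t ^ 2 / 2) + Real.exp (-n * t * ε / 2)) := by
        rw [← ENNReal.ofReal_add (exp_pos _).le (exp_pos _).le,
          ← ENNReal.ofReal_add (exp_pos _).le (by positivity)]
        congr 1
        ring
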